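/- arXiv:1312.0274 — 4 statements merged into one kernel-verified Lean document; each statement's English description precedes it below -/
import Mathlib

section
/- In a Hamiltonian graph consisting of a Hamiltonian cycle plus k chords, for any fixed subset K of the chords there are at most 2 cycles whose chord set is exactly K. Consequently, the total number of cycles in the graph is at most 2^{k+1} − 1. -/
open SimpleGraph

/-- `G` has a cycle of length `k`. -/
def HasCycleLength {V : Type*} (G : SimpleGraph V) (k : ℕ) : Prop :=
  ∃ (v : V) (w : G.Walk v v), w.IsCycle ∧ w.length = k

/-- A graph on a finite vertex type is pancyclic if it has a cycle of every
length `k` with `3 ≤ k ≤ n`, where `n` is the number of vertices. -/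
def Pancyclic {V : Type*} [Fintype V] (G : SimpleGraph V) : Prop :=
  ∀ k : ℕ, 3 ≤ k → k ≤ Fintype.card V → HasCycleLength G k

/-- `m n` is the minimum number of edges of a pancyclic graph on `n` vertices. -/
noncomputable def m (n : ℕ) : ℕ :=
  sInf {e | ∃ G : SimpleGraph (Fin n), Pancyclic G ∧ G.edgeSet.ncard = e}

/-- The set of cycles of `G`, each cycle identified with its edge set. -/
def cycleSets {V : Type*} (G : SimpleGraph V) : Set (Set (Sym2 V)) :=
  {s | ∃ (v : V) (w : G.Walk v v), w.IsCycle ∧ s = {e | e ∈ w.edges}}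


lemma mem_support_of_mem_edges' {V : Type*} {G : SimpleGraph V} {u t x : V} (p : G.Walk u t)
    {e : Sym2 V} (he : e ∈ p.edges) (hx : x ∈ e) : x ∈ p.support := by
  induction e using Sym2.ind with
  | _ a b =>
    rcases Sym2.mem_iff.1 hx with rfl | rfl
    · exact p.fst_mem_support_of_mem_edges he
    · exact p.snd_mem_support_of_mem_edges he

lemma start_incidence {V : Type*} {G : SimpleGraph V} {u t : V} (p : G.Walk u t)
    (hp : p.IsPath) (hne : ¬ p.Nil) :
    ∃ b, b ∈ p.edges ∧ u ∈ b ∧ {e | e ∈ p.edges ∧ u ∈ e} = {b} := by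
  obtain ⟨y, h, q, rfl⟩ := Walk.not_nil_iff.1 hne
  refine ⟨s(u, y), by simp, Sym2.mem_mk_left _ _, ?_⟩
  have hus : u ∉ q.support := by
    have := hp.support_nodup
    rw [Walk.support_cons] at this
    exact (List.nodup_cons.1 this).1
  ext e
  simp only [Walk.edges_cons, List.mem_cons, Set.mem_setOf_eq, Set.mem_singleton_iff]
  constructor
  · rintro ⟨(rfl | he), hu⟩
    · rfl
    · exact absurd (mem_support_of_mem_edges' q he hu) hus
  · rintro rfl
    exact ⟨Or.inl rfl, Sym2.mem_mk_left _ _⟩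


lemma cycle_incidence_pair {V : Type*} {G : SimpleGraph V} {x : V} (c : G.Walk x x)
    (hc : c.IsCycle) :
    ∃ a b, a ≠ b ∧ {e | e ∈ c.edges ∧ x ∈ e} = {a, b} := by
  obtain ⟨u, h, q, rfl⟩ := Walk.not_nil_iff.1 hc.not_nil
  obtain ⟨hq, hxu⟩ := (Walk.cons_isCycle_iff _ _).1 hc
  have hqnil : ¬ q.Nil := by
    intro hn
    have h3 := hc.three_le_length
    have : q.length = 0 := Walk.nil_iff_length_eq.1 hn
    simp [Walk.length_cons, this] at h3
  have hrnil : ¬ q.reverse.Nil := by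
    rw [Walk.nil_iff_length_eq, Walk.length_reverse]
    exact fun h2 => hqnil (Walk.nil_iff_length_eq.2 h2)
  obtain ⟨b, hb, hxb, hset⟩ := start_incidence q.reverse hq.reverse hrnil
  have hbq : b ∈ q.edges := by simpa using hb
  refine ⟨s(x, u), b, ?_, ?_⟩
  · rintro rfl; exact hxu hbq
  · have hqinc : {e | e ∈ q.edges ∧ x ∈ e} = {b} := by
      rw [← hset]; ext e; simp
    ext e
    simp only [Walk.edges_cons, List.mem_cons, Set.mem_setOf_eq, Set.mem_insert_iff,
      Set.mem_singleton_iff]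
    constructor
    · rintro ⟨(rfl | he), hx⟩
      · exact Or.inl rfl
      · exact Or.inr (by have := Set.ext_iff.1 hqinc e; simpa using this.1 ⟨he, hx⟩)
    · rintro (rfl | rfl)
      · exact ⟨Or.inl rfl, Sym2.mem_mk_left _ _⟩
      · exact ⟨Or.inr hbq, hxb⟩

lemma cycle_incidence {V : Type*} {G : SimpleGraph V} {v : V} (c : G.Walk v v)
    (hc : c.IsCycle) (x : V) :
    {e | e ∈ c.edges ∧ x ∈ e} = ∅ ∨
      ∃ a b, a ≠ b ∧ {e | e ∈ c.edges ∧ x ∈ e} = {a, b} := by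
  classical
  by_cases hx : x ∈ c.support
  · right
    obtain ⟨a, b, hab, hset⟩ := cycle_incidence_pair (c.rotate x hx) (hc.rotate hx)
    refine ⟨a, b, hab, ?_⟩
    rw [← hset]
    ext e
    simp only [Set.mem_setOf_eq, (c.rotate_edges x hx).mem_iff]
  · left
    ext e
    simp only [Set.mem_setOf_eq, Set.mem_empty_iff_false, iff_false]
    rintro ⟨he, hxe⟩
    exact hx (mem_support_of_mem_edges' c he hxe)

lemma cycle_incidence_even {V : Type*} {G : SimpleGraph V} {v : V} (c : G.Walk v v)
    (hc : c.IsCycle) (x : V) : Even ({e | e ∈ c.edges ∧ x ∈ e}).ncard := by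
  rcases cycle_incidence c hc x with h | ⟨a, b, hab, h⟩ <;> rw [h]
  · simp
  · rw [Set.ncard_pair hab]; exact even_two


lemma even_sub_pair {X : Type*} {a b : X} {S : Set X} (hab : a ≠ b) (hS : S ⊆ {a, b})
    (h : Even S.ncard) : a ∈ S ↔ b ∈ S := by
  by_cases ha : a ∈ S <;> by_cases hb : b ∈ S <;> simp only [ha, hb, iff_true, true_iff,
    iff_false, false_iff, not_true, not_false_iff]
  ·
    have hSa : S = {a} := by
      apply Set.Subset.antisymm _ (Set.singleton_subset_iff.2 ha)
      intro e he
      rcases hS he with rfl | rfl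
      · rfl
      · exact absurd he hb
    rw [hSa, Set.ncard_singleton] at h
    exact (Nat.not_even_one h).elim
  ·
    have hSb : S = {b} := by
      apply Set.Subset.antisymm _ (Set.singleton_subset_iff.2 hb)
      intro e he
      rcases hS he with rfl | rfl
      · exact absurd he ha
      · rfl
    rw [hSb, Set.ncard_singleton] at h
    exact (Nat.not_even_one h).elim


lemma even_subset_cycle_edges {V : Type*} {G : SimpleGraph V} {v : V} (c : G.Walk v v)
    (hc : c.IsCycle) {T : Set (Sym2 V)} (hT : T ⊆ {e | e ∈ c.edges})
    (heven : ∀ x, Even ({e | e ∈ T ∧ x ∈ e}).ncard) :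
    T = ∅ ∨ T = {e | e ∈ c.edges} := by
  classical
  have hlen : c.darts.length = c.edges.length := by
    rw [Walk.length_darts, Walk.length_edges]
  have hnodup : c.edges.Nodup := hc.edges_nodup
  have hchain : ∀ (i : ℕ) (h : i + 1 < c.edges.length),
      (c.edges[i]'(by omega) ∈ T ↔ c.edges[i + 1]'h ∈ T) := by
    intro i h
    have hd := List.isChain_iff_getElem.1 c.isChain_dartAdj_darts i (by omega)
    have hei : c.edges[i]'(by omega) = (c.darts[i]'(by omega)).edge := by
      simp [Walk.edges, List.getElem_map]
    have hei' : c.edges[i + 1]'h = (c.darts[i + 1]'(by omega)).edge := by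
      simp [Walk.edges, List.getElem_map]
    set d := c.darts[i]'(by omega) with hdd
    set d' := c.darts[i + 1]'(by omega) with hdd'
    set x := d.snd with hx
    have hxd : x ∈ d.edge := by
      rw [SimpleGraph.Dart.edge]; exact Sym2.mem_mk_right _ _
    have hxd' : x ∈ d'.edge := by
      have hfst : x = d'.fst := hd
      rw [hfst, SimpleGraph.Dart.edge]; exact Sym2.mem_mk_left _ _
    have hne : d.edge ≠ d'.edge := by
      intro hEq
      have : i = i + 1 := by
        apply (hnodup.getElem_inj_iff).1
        rw [hei, hei', hEq]
      omega
    have hmemi : d.edge ∈ c.edges := hei ▸ List.getElem_mem _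
    have hmemi' : d'.edge ∈ c.edges := hei' ▸ List.getElem_mem _
    have hpair : {e | e ∈ c.edges ∧ x ∈ e} = {d.edge, d'.edge} := by
      rcases cycle_incidence c hc x with h0 | ⟨a, b, hab, hset⟩
      · exact absurd (Set.ext_iff.1 h0 d.edge |>.1 ⟨hmemi, hxd⟩) (by simp)
      · rw [hset]
        symm
        apply Set.eq_of_subset_of_ncard_le
        · intro e he
          rcases he with rfl | rfl
          · exact hset ▸ (⟨hmemi, hxd⟩ : d.edge ∈ {e | e ∈ c.edges ∧ x ∈ e})
          · exact hset ▸ (⟨hmemi', hxd'⟩ : d'.edge ∈ {e | e ∈ c.edges ∧ x ∈ e})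
        · rw [Set.ncard_pair hab, Set.ncard_pair hne]
        · exact Set.toFinite _
    have hsub : {e | e ∈ T ∧ x ∈ e} ⊆ {d.edge, d'.edge} := by
      rw [← hpair]
      rintro e ⟨heT, hex⟩
      exact ⟨hT heT, hex⟩
    have hiff := even_sub_pair hne hsub (heven x)
    simp only [Set.mem_setOf_eq] at hiff
    rw [hei, hei']
    constructor
    · intro hmem; exact (hiff.1 ⟨hmem, hxd⟩).1
    · intro hmem; exact (hiff.2 ⟨hmem, hxd'⟩).1
  have hLpos : 0 < c.edges.length := by
    have h3 := hc.three_le_length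
    rw [← Walk.length_edges] at h3
    omega
  have hall : ∀ (i : ℕ) (h : i < c.edges.length),
      (c.edges[i]'h ∈ T ↔ c.edges[0]'hLpos ∈ T) := by
    intro i
    induction i with
    | zero => intro h; rfl
    | succ j ih =>
      intro h
      rw [← hchain j h]
      exact ih (by omega)
  by_cases h0 : c.edges[0]'hLpos ∈ T
  · right
    apply Set.Subset.antisymm hT
    intro e he
    obtain ⟨i, hi, hie⟩ := List.getElem_of_mem he
    rw [← hie]
    exact (hall i hi).2 h0
  · left
    ext e
    simp only [Set.mem_empty_iff_false, iff_false]
    intro he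
    obtain ⟨i, hi, hie⟩ := List.getElem_of_mem (hT he)
    exact h0 ((hall i hi).1 (hie ▸ he))


lemma even_symmdiff {X : Type*} {A B : Set X} (hA : A.Finite) (hB : B.Finite)
    (heA : Even A.ncard) (heB : Even B.ncard) :
    Even ((A \ B) ∪ (B \ A)).ncard := by
  rw [Set.ncard_union_eq disjoint_sdiff_sdiff (hA.diff (t := B)) (hB.diff (t := A))]
  have h1 : A \ B = A \ (A ∩ B) := by rw [Set.diff_self_inter]
  have h2 : B \ A = B \ (A ∩ B) := by rw [Set.inter_comm, Set.diff_self_inter]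
  rw [h1, h2, Set.ncard_diff Set.inter_subset_left (hA.inter_of_left B),
    Set.ncard_diff Set.inter_subset_right (hA.inter_of_left B)]
  have hle1 : (A ∩ B).ncard ≤ A.ncard := Set.ncard_le_ncard Set.inter_subset_left hA
  have hle2 : (A ∩ B).ncard ≤ B.ncard := Set.ncard_le_ncard Set.inter_subset_right hB
  rw [Nat.even_iff] at heA heB ⊢
  omega



lemma cycle_set_even {V : Type*} {G : SimpleGraph V} {S : Set (Sym2 V)}
    (hS : S ∈ cycleSets G) (x : V) : Even ({e | e ∈ S ∧ x ∈ e}).ncard := by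
  obtain ⟨v1, c1, hc1, rfl⟩ := hS
  exact cycle_incidence_even c1 hc1 x

lemma cycle_set_finite {V : Type*} {G : SimpleGraph V} {S : Set (Sym2 V)}
    (hS : S ∈ cycleSets G) : S.Finite := by
  obtain ⟨v1, c1, hc1, rfl⟩ := hS
  exact List.finite_toSet _

lemma cycle_set_nonempty {V : Type*} {G : SimpleGraph V} {S : Set (Sym2 V)}
    (hS : S ∈ cycleSets G) : S.Nonempty := by
  obtain ⟨v1, c1, hc1, rfl⟩ := hS
  have h3 := hc1.three_le_length
  rw [← Walk.length_edges] at h3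
  obtain ⟨e, he⟩ := List.exists_mem_of_length_pos (l := c1.edges) (by omega)
  exact ⟨e, he⟩

lemma fiber_structure {V : Type*} {G : SimpleGraph V} {v : V} {w : G.Walk v v}
    (hw : w.IsCycle) {S1 S2 : Set (Sym2 V)}
    (h1 : S1 ∈ cycleSets G) (h2 : S2 ∈ cycleSets G)
    (hK : S1 \ {e | e ∈ w.edges} = S2 \ {e | e ∈ w.edges}) :
    S2 = S1 ∨ S2 = (S1 \ {e | e ∈ w.edges}) ∪ ({e | e ∈ w.edges} \ S1) := by
  set He : Set (Sym2 V) := {e | e ∈ w.edges} with hHe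
  set T : Set (Sym2 V) := (S1 \ S2) ∪ (S2 \ S1) with hT
  have hTsub : T ⊆ He := by
    rintro e (⟨he1, he2⟩ | ⟨he2, he1⟩) <;> by_contra heH
    · exact he2 ((Set.ext_iff.1 hK e).1 ⟨he1, heH⟩).1
    · exact he1 ((Set.ext_iff.1 hK e).2 ⟨he2, heH⟩).1
  have heven : ∀ x, Even ({e | e ∈ T ∧ x ∈ e}).ncard := by
    intro x
    have hsplit : {e | e ∈ T ∧ x ∈ e} =
        ({e | e ∈ S1 ∧ x ∈ e} \ {e | e ∈ S2 ∧ x ∈ e}) ∪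
        ({e | e ∈ S2 ∧ x ∈ e} \ {e | e ∈ S1 ∧ x ∈ e}) := by
      ext e
      simp only [hT, Set.mem_union, Set.mem_diff, Set.mem_setOf_eq]
      tauto
    rw [hsplit]
    exact even_symmdiff ((cycle_set_finite h1).sep _) ((cycle_set_finite h2).sep _)
      (cycle_set_even h1 x) (cycle_set_even h2 x)
  rcases even_subset_cycle_edges w hw hTsub heven with hE | hE
  · left
    rw [hT] at hE
    have ha := Set.union_empty_iff.1 hE
    apply Set.Subset.antisymm
    · exact Set.diff_eq_empty.1 ha.2
    · exact Set.diff_eq_empty.1 ha.1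
  · right
    ext e
    have hTe := Set.ext_iff.1 hE e
    have hKe := Set.ext_iff.1 hK e
    simp only [hT, Set.mem_union, Set.mem_diff, Set.mem_setOf_eq] at hTe hKe ⊢
    tauto


lemma fiber_le_two {V : Type*} {G : SimpleGraph V} {v : V} {w : G.Walk v v}
    (hw : w.IsCycle) (K : Set (Sym2 V)) :
    ({s ∈ cycleSets G | s \ {e | e ∈ w.edges} = K}).ncard ≤ 2 := by
  rcases Set.eq_empty_or_nonempty {s ∈ cycleSets G | s \ {e | e ∈ w.edges} = K} with h | h
  · rw [h]; simp
  · obtain ⟨S1, hS1, hK1⟩ := h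
    have hsub : {s ∈ cycleSets G | s \ {e | e ∈ w.edges} = K} ⊆
        {S1, (S1 \ {e | e ∈ w.edges}) ∪ ({e | e ∈ w.edges} \ S1)} := by
      rintro S2 ⟨hS2, hK2⟩
      rcases fiber_structure hw hS1 hS2 (hK1.trans hK2.symm) with h' | h'
      · exact Or.inl h'
      · exact Or.inr h'
    calc ({s ∈ cycleSets G | s \ {e | e ∈ w.edges} = K}).ncard
        ≤ _ := Set.ncard_le_ncard hsub (Set.toFinite _)
      _ ≤ _ + 1 := Set.ncard_insert_le _ _
      _ ≤ 2 := by rw [Set.ncard_singleton]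

lemma fiber_empty_sub {V : Type*} {G : SimpleGraph V} {v : V} {w : G.Walk v v}
    (hw : w.IsCycle) :
    {s ∈ cycleSets G | s \ {e | e ∈ w.edges} = ∅} ⊆ {({e | e ∈ w.edges} : Set (Sym2 V))} := by
  rintro S ⟨hS, hdiff⟩
  have hsub : S ⊆ {e | e ∈ w.edges} := Set.diff_eq_empty.1 hdiff
  rcases even_subset_cycle_edges w hw hsub (fun x => cycle_set_even hS x) with h | h
  · exact absurd h (cycle_set_nonempty hS).ne_empty
  · exact h


lemma ncard_subsets {X : Type*} {C : Set X} (hC : C.Finite) :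
    {K : Set X | K ⊆ C}.ncard = 2 ^ C.ncard := by
  classical
  have himg : {K : Set X | K ⊆ C} = ((↑) : Finset X → Set X) '' ↑hC.toFinset.powerset := by
    ext K
    simp only [Set.mem_setOf_eq, Set.mem_image, Finset.coe_powerset, Set.mem_preimage,
      Set.mem_powerset_iff]
    constructor
    · intro hK
      have hKfin : K.Finite := hC.subset hK
      refine ⟨hKfin.toFinset, ?_, hKfin.coe_toFinset⟩
      rw [hKfin.coe_toFinset, hC.coe_toFinset]
      exact hK
    · rintro ⟨F, hF, rfl⟩
      rw [hC.coe_toFinset] at hF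
      exact hF
  rw [himg, Set.ncard_image_of_injective _ Finset.coe_injective, Set.ncard_coe_finset,
    Finset.card_powerset, Set.ncard_eq_toFinset_card _ hC]



/-- Shi's theorem: in a Hamiltonian graph (Hamiltonian cycle plus `k` chords),
for each fixed subset `K` of the chords there are at most 2 cycles whose chord
set is exactly `K`; consequently the total number of cycles is at most `2^(k+1) - 1`. -/
theorem stmt_4 {n k : ℕ} (G : SimpleGraph (Fin n))
    (v : Fin n) (w : G.Walk v v) (hw : w.IsHamiltonianCycle)
    (hk : (G.edgeSet \ {e | e ∈ w.edges}).ncard = k) :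
    (∀ K ⊆ G.edgeSet \ {e | e ∈ w.edges},
      ({s ∈ cycleSets G | s \ {e | e ∈ w.edges} = K}).ncard ≤ 2) ∧
    (cycleSets G).ncard ≤ 2 ^ (k + 1) - 1 := by
  classical
  have hwc : w.IsCycle := hw.isCycle
  refine ⟨fun K _ => fiber_le_two hwc K, ?_⟩
  set He : Set (Sym2 (Fin n)) := {e | e ∈ w.edges} with hHe
  set chords : Set (Sym2 (Fin n)) := G.edgeSet \ He with hchords
  set A : Set (Set (Sym2 (Fin n))) := cycleSets G with hA
  set A0 : Set (Set (Sym2 (Fin n))) := {s ∈ A | s \ He = ∅} with hA0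
  set A1 : Set (Set (Sym2 (Fin n))) := {s ∈ A | s \ He ≠ ∅} with hA1
  have hAsplit : A = A0 ∪ A1 := by
    ext s
    simp only [hA0, hA1, Set.mem_union, Set.mem_setOf_eq]
    tauto
  have h0 : A0.ncard ≤ 1 := by
    calc A0.ncard ≤ ({He} : Set (Set (Sym2 (Fin n)))).ncard :=
          Set.ncard_le_ncard (fiber_empty_sub hwc) (Set.toFinite _)
      _ = 1 := Set.ncard_singleton _
  -- bound A1
  set f : Set (Sym2 (Fin n)) → Set (Sym2 (Fin n)) := fun s => s \ He with hf
  set Bf : Finset (Set (Sym2 (Fin n))) := (Set.toFinite A1).toFinset with hBf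
  have hBfcard : A1.ncard = Bf.card := Set.ncard_eq_toFinset_card _ _
  have hfib : ∀ K ∈ Bf.image f, (Bf.filter (fun s => f s = K)).card ≤ 2 := by
    intro K _
    have hsub : ↑(Bf.filter (fun s => f s = K)) ⊆
        {s ∈ cycleSets G | s \ He = K} := by
      intro s hs
      simp only [Finset.coe_filter, Set.mem_setOf_eq, hBf, Set.Finite.mem_toFinset] at hs
      exact ⟨hs.1.1, hs.2⟩
    calc (Bf.filter (fun s => f s = K)).card
        = (↑(Bf.filter (fun s => f s = K)) : Set _).ncard := (Set.ncard_coe_finset _).symm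
      _ ≤ ({s ∈ cycleSets G | s \ He = K}).ncard :=
          Set.ncard_le_ncard hsub (Set.toFinite _)
      _ ≤ 2 := fiber_le_two hwc K
  have hmul : Bf.card ≤ 2 * (Bf.image f).card := Finset.card_le_mul_card_image Bf 2 hfib
  have himgsub : ↑(Bf.image f) ⊆ {K : Set (Sym2 (Fin n)) | K ⊆ chords ∧ K ≠ ∅} := by
    intro K hK
    simp only [Finset.coe_image, Set.mem_image, hBf, Set.Finite.coe_toFinset] at hK
    obtain ⟨s, hs, rfl⟩ := hK
    constructor
    · intro e he
      refine ⟨?_, he.2⟩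
      obtain ⟨v1, c1, hc1, rfl⟩ := hs.1
      exact c1.edges_subset_edgeSet he.1
    · exact hs.2
  have hPcard : ({K : Set (Sym2 (Fin n)) | K ⊆ chords}).ncard = 2 ^ k := by
    rw [ncard_subsets (Set.toFinite chords), hk]
  have hNE : ({K : Set (Sym2 (Fin n)) | K ⊆ chords ∧ K ≠ ∅}).ncard = 2 ^ k - 1 := by
    have : {K : Set (Sym2 (Fin n)) | K ⊆ chords ∧ K ≠ ∅} =
        {K : Set (Sym2 (Fin n)) | K ⊆ chords} \ {∅} := by
      ext K
      simp only [Set.mem_setOf_eq, Set.mem_diff, Set.mem_singleton_iff]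
    rw [this, Set.ncard_diff_singleton_of_mem (by simp), hPcard]
  have himg : (Bf.image f).card ≤ 2 ^ k - 1 := by
    calc (Bf.image f).card = (↑(Bf.image f) : Set _).ncard := (Set.ncard_coe_finset _).symm
      _ ≤ ({K : Set (Sym2 (Fin n)) | K ⊆ chords ∧ K ≠ ∅}).ncard :=
          Set.ncard_le_ncard himgsub (Set.toFinite _)
      _ = 2 ^ k - 1 := hNE
  have h1 : A1.ncard ≤ 2 * (2 ^ k - 1) := by
    rw [hBfcard]
    calc Bf.card ≤ 2 * (Bf.image f).card := hmul
      _ ≤ 2 * (2 ^ k - 1) := by omega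
  have hpow : 1 ≤ 2 ^ k := Nat.one_le_two_pow
  calc A.ncard ≤ A0.ncard + A1.ncard := by
        rw [hAsplit]; exact Set.ncard_union_le _ _
    _ ≤ 1 + 2 * (2 ^ k - 1) := by omega
    _ ≤ 2 ^ (k + 1) - 1 := by
        rw [pow_succ]
        omega
end

section
/- If G is a pancyclic graph on n vertices consisting of a Hamiltonian cycle plus k chords, then n + k ≥ n + log₂(n−1) − 1; equivalently, 2^{k+1} − 1 ≥ n − 2. In particular m(n) ≥ n + log₂(n−1) − 1. -/
open SimpleGraph

set_option linter.unusedSectionVars false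
set_option linter.unreachableTactic false
set_option linter.unusedTactic false
set_option maxHeartbeats 1000000

section Helpers

variable {V : Type*} [DecidableEq V] {G : SimpleGraph V}

lemma mem_support_of_mem_edge {u v' x : V} (p : G.Walk u v') {e : Sym2 V}
    (he : e ∈ p.edges) (hx : x ∈ e) : x ∈ p.support := by
  induction e with
  | _ a b =>
    rcases Sym2.mem_iff.mp hx with rfl | rfl
    · exact p.fst_mem_support_of_mem_edges he
    · exact p.snd_mem_support_of_mem_edges he

lemma parity_lemma {u v' : V} (p : G.Walk u v') (x : V) :
    ((p.edges.filter (fun e => x ∈ e)).length : ZMod 2)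
      = (if x = u then 1 else 0) + (if x = v' then 1 else 0) := by
  induction p with
  | nil => simp only [Walk.edges_nil, List.filter_nil, List.length_nil, Nat.cast_zero]
           split_ifs <;> decide
  | @cons u w v'' h q ih =>
    rw [Walk.edges_cons, List.filter_cons]
    by_cases hx : x ∈ s(u, w)
    · rw [if_pos (by simpa using hx)]
      rcases Sym2.mem_iff.mp hx with rfl | rfl
      · have hxw : x ≠ w := h.ne
        simp only [List.length_cons, Nat.cast_add, Nat.cast_one, ih, if_pos rfl, if_neg hxw]
        rcases eq_or_ne x v'' with rfl | hv <;> simp_all <;> decide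
      · have hxu : x ≠ u := h.ne'
        simp only [List.length_cons, Nat.cast_add, Nat.cast_one, ih, if_pos rfl, if_neg hxu]
        rcases eq_or_ne x v'' with rfl | hv <;> simp_all <;> decide
    · have hxu : x ≠ u := fun hh => hx (by simp [hh])
      have hxw : x ≠ w := fun hh => hx (by simp [hh])
      rw [if_neg (by simpa using hx), ih, if_neg hxw, if_neg hxu]

lemma deg_toFinset {l : List (Sym2 V)} (hl : l.Nodup) (x : V) :
    (l.toFinset.filter (fun e => x ∈ e)).card = (l.filter (fun e => x ∈ e)).length := by
  have h1 : l.toFinset.filter (fun e => x ∈ e) = (l.filter (fun e => x ∈ e)).toFinset := by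
    rw [List.toFinset_filter]
    apply Finset.filter_congr
    intro e _
    simp
  rw [h1, List.toFinset_card_of_nodup (hl.filter _)]

lemma cycle_even {u : V} (c : G.Walk u u) (hc : c.IsTrail) (x : V) :
    ((c.edges.toFinset.filter (fun e => x ∈ e)).card : ZMod 2) = 0 := by
  rw [deg_toFinset hc.edges_nodup, parity_lemma]
  split_ifs <;> decide

lemma path_dichotomy : ∀ {u v' : V} (p : G.Walk u v'), p.IsPath →
    ∀ d : Finset (Sym2 V), d ⊆ p.edges.toFinset →
    (∀ x, x ≠ u → x ≠ v' → ((d.filter (fun e => x ∈ e)).card : ZMod 2) = 0) →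
    d = ∅ ∨ d = p.edges.toFinset
  | _, _, Walk.nil, hp, d, hd, hev => by
      left; simpa using hd
  | u, v', Walk.cons (v := w) h q, hp, d, hd, hev => by
      have hq : q.IsPath := ((Walk.cons_isPath_iff h q).mp hp).1
      have hus : u ∉ q.support := ((Walk.cons_isPath_iff h q).mp hp).2
      have hK : s(u, w) ∉ q.edges := fun hmem => hus (q.fst_mem_support_of_mem_edges hmem)
      have hd' : d.erase s(u, w) ⊆ q.edges.toFinset := by
        intro e he
        have h1 : e ≠ s(u, w) := Finset.ne_of_mem_erase he
        have h2 := hd (Finset.mem_of_mem_erase he)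
        rw [Walk.edges_cons, List.toFinset_cons] at h2
        rcases Finset.mem_insert.mp h2 with rfl | h3
        · exact absurd rfl h1
        · exact h3
      have hev' : ∀ x, x ≠ w → x ≠ v' →
          (((d.erase s(u, w)).filter (fun e => x ∈ e)).card : ZMod 2) = 0 := by
        intro x hxw hxv
        by_cases hxu : x = u
        · have hempty : (d.erase s(u, w)).filter (fun e => x ∈ e) = ∅ := by
            rw [Finset.filter_eq_empty_iff]
            intro e he hxe
            exact hus (mem_support_of_mem_edge q (List.mem_toFinset.mp (hd' he)) (hxu ▸ hxe))
          rw [hempty]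
          simp
        · have hfe : (d.erase s(u, w)).filter (fun e => x ∈ e) = d.filter (fun e => x ∈ e) := by
            rw [Finset.filter_erase, Finset.erase_eq_of_notMem]
            intro hmem
            rcases Sym2.mem_iff.mp (Finset.mem_filter.mp hmem).2 with rfl | rfl
            · exact hxu rfl
            · exact hxw rfl
          rw [hfe]; exact hev x hxu hxv
      by_cases hqe : q.edges = []
      · have hwv' : w = v' := q.eq_of_length_eq_zero (by rw [← Walk.length_edges, hqe]; rfl)
        have hsub : d ⊆ {s(u, w)} := by simpa [hqe] using hd
        rcases Finset.subset_singleton_iff.mp hsub with h0 | h0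
        · left; exact h0
        · right; rw [h0]; simp [hqe]
      · have hwv : w ≠ v' := by
          rintro rfl
          exact hqe (by rw [(Walk.isPath_iff_eq_nil (p := q)).mp hq]; rfl)
        have hdegw : ((d.filter (fun e => w ∈ e)).card : ZMod 2) = 0 := hev w h.ne' hwv
        rcases path_dichotomy q hq (d.erase s(u, w)) hd' hev' with h0 | hfull
        · by_cases hmem : s(u, w) ∈ d
          · exfalso
            have hde : d = {s(u, w)} := by
              apply Finset.Subset.antisymm _ (Finset.singleton_subset_iff.mpr hmem)
              intro e he
              rcases eq_or_ne e s(u, w) with rfl | hne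
              · exact Finset.mem_singleton_self _
              · exact absurd (h0 ▸ Finset.mem_erase.mpr ⟨hne, he⟩) (Finset.notMem_empty e)
            rw [hde, Finset.filter_singleton, if_pos (by simp)] at hdegw
            simp at hdegw
          · left
            rw [← Finset.erase_eq_of_notMem hmem, h0]
        · have hmem : s(u, w) ∈ d := by
            by_contra hmem
            have hdd : d = q.edges.toFinset := by
              rw [← hfull, Finset.erase_eq_of_notMem hmem]
            rw [hdd, deg_toFinset hq.isTrail.edges_nodup w, parity_lemma] at hdegw
            simp [hwv] at hdegw
          right
          rw [Walk.edges_cons, List.toFinset_cons, ← hfull, Finset.insert_erase hmem]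

lemma cycle_dichotomy {u : V} (c : G.Walk u u) (hc : c.IsCycle)
    (d : Finset (Sym2 V)) (hd : d ⊆ c.edges.toFinset)
    (hev : ∀ x, ((d.filter (fun e => x ∈ e)).card : ZMod 2) = 0) :
    d = ∅ ∨ d = c.edges.toFinset := by
  cases c with
  | nil => exact absurd rfl hc.ne_nil
  | @cons _ w _ h q =>
    have hq : q.IsPath := ((Walk.cons_isCycle_iff q h).mp hc).1
    have hwu : w ≠ u := h.ne'
    have hd' : d.erase s(u, w) ⊆ q.edges.toFinset := by
      intro e he
      have h1 : e ≠ s(u, w) := Finset.ne_of_mem_erase he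
      have h2 := hd (Finset.mem_of_mem_erase he)
      rw [Walk.edges_cons, List.toFinset_cons] at h2
      rcases Finset.mem_insert.mp h2 with rfl | h3
      · exact absurd rfl h1
      · exact h3
    have hev' : ∀ x, x ≠ w → x ≠ u →
        (((d.erase s(u, w)).filter (fun e => x ∈ e)).card : ZMod 2) = 0 := by
      intro x hxw hxu
      have hfe : (d.erase s(u, w)).filter (fun e => x ∈ e) = d.filter (fun e => x ∈ e) := by
        rw [Finset.filter_erase, Finset.erase_eq_of_notMem]
        intro hmem
        rcases Sym2.mem_iff.mp (Finset.mem_filter.mp hmem).2 with rfl | rfl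
        · exact hxu rfl
        · exact hxw rfl
      rw [hfe]; exact hev x
    have hdegw := hev w
    rcases path_dichotomy q hq (d.erase s(u, w)) hd' hev' with h0 | hfull
    · by_cases hmem : s(u, w) ∈ d
      · exfalso
        have hde : d = {s(u, w)} := by
          apply Finset.Subset.antisymm _ (Finset.singleton_subset_iff.mpr hmem)
          intro e he
          rcases eq_or_ne e s(u, w) with rfl | hne
          · exact Finset.mem_singleton_self _
          · exact absurd (h0 ▸ Finset.mem_erase.mpr ⟨hne, he⟩) (Finset.notMem_empty e)
        rw [hde, Finset.filter_singleton, if_pos (by simp)] at hdegw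
        simp at hdegw
      · left
        rw [← Finset.erase_eq_of_notMem hmem, h0]
    · have hmem : s(u, w) ∈ d := by
        by_contra hmem
        have hdd : d = q.edges.toFinset := by
          rw [← hfull, Finset.erase_eq_of_notMem hmem]
        rw [hdd, deg_toFinset hq.isTrail.edges_nodup w, parity_lemma] at hdegw
        simp [hwu] at hdegw
      right
      rw [Walk.edges_cons, List.toFinset_cons, ← hfull, Finset.insert_erase hmem]

lemma key_lemma {v u₁ u₂ : V} (w : G.Walk v v) (hw : w.IsCycle)
    (c₁ : G.Walk u₁ u₁) (c₂ : G.Walk u₂ u₂) (h₁ : c₁.IsCycle) (h₂ : c₂.IsCycle)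
    (hch : c₁.edges.toFinset \ w.edges.toFinset = c₂.edges.toFinset \ w.edges.toFinset)
    {e₀ : Sym2 V} (he₀ : e₀ ∈ w.edges) (hbit : e₀ ∈ c₁.edges ↔ e₀ ∈ c₂.edges) :
    c₁.edges.toFinset = c₂.edges.toFinset := by
  set s₁ := c₁.edges.toFinset with hs₁
  set s₂ := c₂.edges.toFinset with hs₂
  set d : Finset (Sym2 V) := (s₁ \ s₂) ∪ (s₂ \ s₁) with hdd
  have hdsub : d ⊆ w.edges.toFinset := by
    intro e he
    by_contra hnot
    rcases Finset.mem_union.mp he with h3 | h3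
    · have h1 := Finset.mem_sdiff.mp h3
      have h2 : e ∈ s₂ \ w.edges.toFinset := hch ▸ Finset.mem_sdiff.mpr ⟨h1.1, hnot⟩
      exact h1.2 (Finset.mem_sdiff.mp h2).1
    · have h1 := Finset.mem_sdiff.mp h3
      have h2 : e ∈ s₁ \ w.edges.toFinset := hch.symm ▸ Finset.mem_sdiff.mpr ⟨h1.1, hnot⟩
      exact h1.2 (Finset.mem_sdiff.mp h2).1
  have hev : ∀ x, ((d.filter (fun e => x ∈ e)).card : ZMod 2) = 0 := by
    intro x
    have hdisj1 : Disjoint (s₁ \ s₂) (s₁ ∩ s₂) :=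
      Finset.sdiff_disjoint.mono_right Finset.inter_subset_right
    have hdisj2 : Disjoint (s₂ \ s₁) (s₂ ∩ s₁) :=
      Finset.sdiff_disjoint.mono_right Finset.inter_subset_right
    have hdisj0 : Disjoint (s₁ \ s₂) (s₂ \ s₁) :=
      Finset.sdiff_disjoint.mono_right Finset.sdiff_subset
    have e1 : ((s₁ \ s₂).filter (fun e => x ∈ e)).card
        + ((s₁ ∩ s₂).filter (fun e => x ∈ e)).card = (s₁.filter (fun e => x ∈ e)).card := by
      rw [← Finset.card_union_of_disjoint (Finset.disjoint_filter_filter hdisj1),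
        ← Finset.filter_union, Finset.sdiff_union_inter]
    have e2 : ((s₂ \ s₁).filter (fun e => x ∈ e)).card
        + ((s₂ ∩ s₁).filter (fun e => x ∈ e)).card = (s₂.filter (fun e => x ∈ e)).card := by
      rw [← Finset.card_union_of_disjoint (Finset.disjoint_filter_filter hdisj2),
        ← Finset.filter_union, Finset.sdiff_union_inter]
    have e3 : (d.filter (fun e => x ∈ e)).card
        = ((s₁ \ s₂).filter (fun e => x ∈ e)).card + ((s₂ \ s₁).filter (fun e => x ∈ e)).card := by
      rw [hdd, Finset.filter_union, Finset.card_union_of_disjoint (Finset.disjoint_filter_filter hdisj0)]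
    have hc1 : ((s₁.filter (fun e => x ∈ e)).card : ZMod 2) = 0 := cycle_even c₁ h₁.isCircuit.isTrail x
    have hc2 : ((s₂.filter (fun e => x ∈ e)).card : ZMod 2) = 0 := cycle_even c₂ h₂.isCircuit.isTrail x
    have hint : (s₂ ∩ s₁).filter (fun e => x ∈ e) = (s₁ ∩ s₂).filter (fun e => x ∈ e) := by
      rw [Finset.inter_comm]
    rw [hint] at e2
    have e1' : (((s₁ \ s₂).filter (fun e => x ∈ e)).card : ZMod 2)
        + (((s₁ ∩ s₂).filter (fun e => x ∈ e)).card : ZMod 2) = 0 := by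
      rw [← Nat.cast_add, e1, hc1]
    have e2' : (((s₂ \ s₁).filter (fun e => x ∈ e)).card : ZMod 2)
        + (((s₁ ∩ s₂).filter (fun e => x ∈ e)).card : ZMod 2) = 0 := by
      rw [← Nat.cast_add, e2, hc2]
    have h2z : (2 : ZMod 2) = 0 := rfl
    rw [e3, Nat.cast_add]
    linear_combination e1' + e2' - (((s₁ ∩ s₂).filter (fun e => x ∈ e)).card : ZMod 2) * h2z
  rcases cycle_dichotomy w hw d hdsub hev with h0 | hfull
  · have h1 : s₁ \ s₂ = ∅ := Finset.union_eq_empty.mp h0 |>.1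
    have h2 : s₂ \ s₁ = ∅ := Finset.union_eq_empty.mp h0 |>.2
    exact Finset.Subset.antisymm (Finset.sdiff_eq_empty_iff_subset.mp h1)
      (Finset.sdiff_eq_empty_iff_subset.mp h2)
  · exfalso
    have he₀d : e₀ ∈ d := by rw [hfull]; exact List.mem_toFinset.mpr he₀
    rcases Finset.mem_union.mp he₀d with h3 | h3
    · have h4 := Finset.mem_sdiff.mp h3
      exact h4.2 (List.mem_toFinset.mpr (hbit.mp (List.mem_toFinset.mp h4.1)))
    · have h4 := Finset.mem_sdiff.mp h3
      exact h4.2 (List.mem_toFinset.mpr (hbit.mpr (List.mem_toFinset.mp h4.1)))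


end Helpers

lemma bondy {n : ℕ} {G : SimpleGraph (Fin n)} {v : Fin n} {w : G.Walk v v}
    (hw : w.IsHamiltonianCycle) (hG : Pancyclic G) :
    n - 2 ≤ 2 ^ ((G.edgeSet \ {e | e ∈ w.edges}).ncard + 1) - 1 := by
  classical
  have hlen : w.length = n := by rw [hw.length_eq, Fintype.card_fin]
  have hn3 : 3 ≤ n := hlen ▸ hw.isCycle.three_le_length
  set k := (G.edgeSet \ {e | e ∈ w.edges}).ncard with hk
  set Hfin : Finset (Sym2 (Fin n)) := w.edges.toFinset with hHfin
  have hSfin : (G.edgeSet \ {e | e ∈ w.edges}).Finite := Set.toFinite _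
  have hCcard : hSfin.toFinset.card = k := by
    rw [hk, Set.ncard_eq_toFinset_card _ hSfin]
  have hwne : w.edges ≠ [] := by
    intro h
    have := w.length_edges
    rw [h] at this
    simp [hlen] at this
    omega
  obtain ⟨e₀, he₀⟩ : ∃ e, e ∈ w.edges := List.exists_mem_of_ne_nil _ hwne
  have hex : ∀ l : ℕ, ∃ p : (u : Fin n) × G.Walk u u,
      3 ≤ l → l ≤ n → p.2.IsCycle ∧ p.2.length = l := by
    intro l
    by_cases hl : 3 ≤ l ∧ l ≤ n
    · obtain ⟨u, c, hc, hlen'⟩ := hG l hl.1 (by rw [Fintype.card_fin]; exact hl.2)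
      exact ⟨⟨u, c⟩, fun _ _ => ⟨hc, hlen'⟩⟩
    · exact ⟨⟨v, Walk.nil⟩, fun h1 h2 => absurd ⟨h1, h2⟩ hl⟩
  choose c hc using hex
  set T : Finset (Finset (Sym2 (Fin n)) × Bool) :=
    (hSfin.toFinset.powerset ×ˢ (Finset.univ : Finset Bool)).erase (∅, false) with hT
  have hTcard : T.card = 2 ^ (k + 1) - 1 := by
    rw [hT, Finset.card_erase_of_mem (by simp), Finset.card_product, Finset.card_powerset,
      hCcard, Finset.card_univ, Fintype.card_bool, pow_succ]
  set f : ℕ → Finset (Sym2 (Fin n)) × Bool :=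
    fun l => ((c l).2.edges.toFinset \ Hfin, decide (e₀ ∈ (c l).2.edges)) with hf
  have hmaps : ∀ l ∈ Finset.Icc 3 n, f l ∈ T := by
    intro l hl
    obtain ⟨hl3, hln⟩ := Finset.mem_Icc.mp hl
    obtain ⟨hcl, hlenl⟩ := hc l hl3 hln
    rw [hT, Finset.mem_erase]
    constructor
    · -- f l ≠ (∅, false)
      intro heq
      have h1 : (c l).2.edges.toFinset \ Hfin = ∅ := congrArg Prod.fst heq
      have h2 : decide (e₀ ∈ (c l).2.edges) = false := congrArg Prod.snd heq
      have hsub : (c l).2.edges.toFinset ⊆ Hfin := Finset.sdiff_eq_empty_iff_subset.mp h1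
      have hev := fun x => cycle_even (c l).2 hcl.isCircuit.isTrail x
      rcases cycle_dichotomy w hw.isCycle _ hsub hev with h3 | h3
      · have : (c l).2.edges.length = 0 := by
          rw [← List.toFinset_card_of_nodup hcl.isCircuit.isTrail.edges_nodup, h3]
          simp
        rw [(c l).2.length_edges, hlenl] at this
        omega
      · have : e₀ ∈ (c l).2.edges := by
          rw [← List.mem_toFinset, h3]
          exact List.mem_toFinset.mpr he₀
        simp [this] at h2
    · -- membership in product
      rw [Finset.mem_product]
      refine ⟨Finset.mem_powerset.mpr ?_, Finset.mem_univ _⟩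
      intro e he
      obtain ⟨he1, he2⟩ := Finset.mem_sdiff.mp he
      rw [Set.Finite.mem_toFinset]
      exact ⟨(c l).2.edges_subset_edgeSet (List.mem_toFinset.mp he1),
        fun hmem => he2 (List.mem_toFinset.mpr hmem)⟩
  have hinj : Set.InjOn f (Finset.Icc 3 n) := by
    intro l₁ hl₁ l₂ hl₂ heq
    simp only [Finset.coe_Icc, Set.mem_Icc] at hl₁ hl₂
    obtain ⟨hc₁, hlen₁⟩ := hc l₁ hl₁.1 hl₁.2
    obtain ⟨hc₂, hlen₂⟩ := hc l₂ hl₂.1 hl₂.2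
    have h1 : (c l₁).2.edges.toFinset \ Hfin = (c l₂).2.edges.toFinset \ Hfin :=
      congrArg Prod.fst heq
    have h2 : (e₀ ∈ (c l₁).2.edges) ↔ (e₀ ∈ (c l₂).2.edges) := by
      have := congrArg Prod.snd heq
      simpa [hf, decide_eq_decide] using this
    have := key_lemma w hw.isCycle (c l₁).2 (c l₂).2 hc₁ hc₂ h1 he₀ h2
    have hcard : (c l₁).2.edges.length = (c l₂).2.edges.length := by
      rw [← List.toFinset_card_of_nodup hc₁.isCircuit.isTrail.edges_nodup,
        ← List.toFinset_card_of_nodup hc₂.isCircuit.isTrail.edges_nodup, this]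
    rw [(c l₁).2.length_edges, (c l₂).2.length_edges, hlen₁, hlen₂] at hcard
    exact hcard
  have hcount := Finset.card_le_card_of_injOn f hmaps hinj
  rw [Nat.card_Icc, hTcard] at hcount
  omega

lemma edge_count {n : ℕ} {G : SimpleGraph (Fin n)} {v : Fin n} {w : G.Walk v v}
    (hw : w.IsHamiltonianCycle) :
    G.edgeSet.ncard = n + (G.edgeSet \ {e | e ∈ w.edges}).ncard := by
  classical
  have hsub : {e : Sym2 (Fin n) | e ∈ w.edges} ⊆ G.edgeSet :=
    fun e he => w.edges_subset_edgeSet he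
  have hfin : G.edgeSet.Finite := Set.toFinite _
  have h1 : {e : Sym2 (Fin n) | e ∈ w.edges}.ncard = n := by
    have h2 : {e : Sym2 (Fin n) | e ∈ w.edges} = ↑w.edges.toFinset := by
      ext e; simp
    rw [h2, Set.ncard_coe_finset,
      List.toFinset_card_of_nodup hw.isCycle.isCircuit.isTrail.edges_nodup,
      w.length_edges, hw.length_eq, Fintype.card_fin]
  have h3 := Set.ncard_diff_add_ncard_of_subset hsub hfin
  omega

lemma ham_of_pancyclic {n : ℕ} (hn : 3 ≤ n) {H : SimpleGraph (Fin n)} (hH : Pancyclic H) :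
    ∃ (v : Fin n) (w : H.Walk v v), w.IsHamiltonianCycle := by
  obtain ⟨v, w, hcyc, hlen⟩ := hH n hn (by rw [Fintype.card_fin])
  refine ⟨v, w, ?_⟩
  rw [Walk.isHamiltonianCycle_iff_isCycle_and_support_count_tail_eq_one]
  refine ⟨hcyc, fun a => ?_⟩
  have hnd : w.support.tail.Nodup := hcyc.support_nodup
  have hlen' : w.support.tail.length = n := by
    have := w.length_support
    have h2 : w.support.tail.length = w.support.length - 1 := by simp
    omega
  have hmem : a ∈ w.support.tail := by
    have huniv : w.support.tail.toFinset = Finset.univ :=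
      Finset.eq_univ_of_card _ (by
        rw [List.toFinset_card_of_nodup hnd, hlen', Fintype.card_fin])
    rw [← List.mem_toFinset, huniv]
    exact Finset.mem_univ a
  exact List.count_eq_one_of_mem hnd hmem

lemma real_bound {n k : ℕ} (hn : 3 ≤ n) (h : n - 2 ≤ 2 ^ (k + 1) - 1) :
    (n : ℝ) + Real.logb 2 ((n : ℝ) - 1) - 1 ≤ (n : ℝ) + (k : ℝ) := by
  have h1 : n - 1 ≤ 2 ^ (k + 1) := by
    have := Nat.one_le_two_pow (n := k + 1)
    omega
  have h2 : ((n : ℝ) - 1) ≤ (2 : ℝ) ^ (k + 1) := by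
    have h3 := (Nat.cast_le (α := ℝ)).mpr h1
    rw [Nat.cast_sub (by omega)] at h3
    push_cast at h3
    linarith
  have hnR : (3 : ℝ) ≤ (n : ℝ) := by exact_mod_cast hn
  have h3 : Real.logb 2 ((n : ℝ) - 1) ≤ Real.logb 2 ((2 : ℝ) ^ (k + 1)) :=
    Real.logb_le_logb_of_le (by norm_num) (by linarith) h2
  have h4 : Real.logb 2 ((2 : ℝ) ^ (k + 1)) = (k + 1 : ℝ) := by
    rw [Real.logb_pow]
    simp [Real.logb_self_eq_one]
  rw [h4] at h3
  push_cast at h3 ⊢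
  linarith

/-- Bondy's lower bound: if `G` is pancyclic on `n` vertices, consisting of a
Hamiltonian cycle plus `k` chords, then `2^(k+1) - 1 ≥ n - 2`, equivalently
`n + k ≥ n + log₂(n-1) - 1`; in particular `m n ≥ n + log₂(n-1) - 1`. -/
theorem stmt_5 {n k : ℕ} (G : SimpleGraph (Fin n))
    (v : Fin n) (w : G.Walk v v) (hw : w.IsHamiltonianCycle)
    (hk : (G.edgeSet \ {e | e ∈ w.edges}).ncard = k)
    (hG : Pancyclic G) :
    n - 2 ≤ 2 ^ (k + 1) - 1 ∧
    (n : ℝ) + Real.logb 2 ((n : ℝ) - 1) - 1 ≤ (n : ℝ) + (k : ℝ) ∧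
    (n : ℝ) + Real.logb 2 ((n : ℝ) - 1) - 1 ≤ (m n : ℝ) := by
  have hn3 : 3 ≤ n := by
    have h1 := hw.isCycle.three_le_length
    have h2 := hw.length_eq
    rw [Fintype.card_fin] at h2
    omega
  have hb := bondy hw hG
  rw [hk] at hb
  refine ⟨hb, real_bound hn3 hb, ?_⟩
  have hne : {e | ∃ H : SimpleGraph (Fin n), Pancyclic H ∧ H.edgeSet.ncard = e}.Nonempty :=
    ⟨G.edgeSet.ncard, G, hG, rfl⟩
  have hmem : m n ∈ {e | ∃ H : SimpleGraph (Fin n), Pancyclic H ∧ H.edgeSet.ncard = e} :=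
    Nat.sInf_mem hne
  obtain ⟨H, hHpan, hHcard⟩ := hmem
  obtain ⟨v', w', hw'⟩ := ham_of_pancyclic hn3 hHpan
  set k' := (H.edgeSet \ {e | e ∈ w'.edges}).ncard with hk'
  have hb' := bondy hw' hHpan
  have hec := edge_count hw'
  have hreal := real_bound hn3 hb'
  have hmn : (m n : ℝ) = (n : ℝ) + (k' : ℝ) := by
    rw [← hHcard, hec]
    push_cast
    ring
  rw [hmn]
  exact hreal
end

section
/- Let G be a pancyclic graph with n > 6 vertices, Hamiltonian cycle H, and let A be an arc of H (a maximal path in H whose interior vertices have degree 2 in G) such that no chord joins the two endpoints of A and |A| ≥ (n−1)/2 edges. Then the graph G_A obtained from G by contracting one edge of A is pancyclic on n−1 vertices. -/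
open SimpleGraph

/-- Contract the edge `{u, v}` of `G`: delete `u` and attach its neighbors to `v`. -/
def contractEdge {V : Type*} (G : SimpleGraph V) (u v : V) :
    SimpleGraph {x : V // x ≠ u} where
  Adj a b := a ≠ b ∧
    (G.Adj a b ∨ ((a : V) = v ∧ G.Adj u b) ∨ ((b : V) = v ∧ G.Adj a u))
  symm := ⟨by
    rintro a b ⟨hab, h⟩
    refine ⟨hab.symm, ?_⟩
    rcases h with h | ⟨h1, h2⟩ | ⟨h1, h2⟩
    · exact Or.inl h.symm
    · exact Or.inr (Or.inr ⟨h1, h2.symm⟩)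
    · exact Or.inr (Or.inl ⟨h1, h2.symm⟩)⟩
  loopless := ⟨fun a h => h.1 rfl⟩

/-- `a, a+1, …, a+L` is an arc of the standard Hamiltonian cycle `0,1,…,n-1` of
`G` on `ZMod n`: a maximal path of the cycle all of whose interior vertices have
degree 2 (maximality: the two endpoints have degree greater than 2). -/
def IsArc {n : ℕ} (G : SimpleGraph (ZMod n)) (a : ZMod n) (L : ℕ) : Prop :=
  L < n ∧
  (∀ t : ℕ, 0 < t → t < L → (G.neighborSet (a + (t : ZMod n))).ncard = 2) ∧
  2 < (G.neighborSet a).ncard ∧ 2 < (G.neighborSet (a + (L : ZMod n))).ncard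

namespace PancyclicAux

open SimpleGraph Walk

variable {V : Type*} {G : SimpleGraph V}

lemma subtype_ne {c x y : V} (h : x ≠ y) {hx : x ≠ c} {hy : y ≠ c} :
    (⟨x, hx⟩ : {z : V // z ≠ c}) ≠ ⟨y, hy⟩ := by
  simp [Subtype.ext_iff, h]

/-- Lift a walk of `G` avoiding `c` to a walk of `contractEdge G c d`. -/
def liftWalk (c d : V) : ∀ {u v : V} (p : G.Walk u v)
    (hp : ∀ x ∈ p.support, x ≠ c),
    (contractEdge G c d).Walk ⟨u, hp u p.start_mem_support⟩ ⟨v, hp v p.end_mem_support⟩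
  | _, _, Walk.nil, _ => Walk.nil
  | _, _, Walk.cons h q, hp =>
      Walk.cons (G := contractEdge G c d) (show (contractEdge G c d).Adj _ _ from And.intro (subtype_ne h.ne) (Or.inl h))
        (liftWalk c d q (fun x hx => hp x (by simp [Walk.support_cons]; exact Or.inr hx)))

lemma liftWalk_support (c d : V) : ∀ {u v : V} (p : G.Walk u v)
    (hp : ∀ x ∈ p.support, x ≠ c),
    (liftWalk c d p hp).support.map Subtype.val = p.support
  | _, _, Walk.nil, _ => by simp [liftWalk]
  | _, _, Walk.cons h q, hp => by
      simp only [liftWalk, Walk.support_cons, List.map_cons, liftWalk_support]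

lemma liftWalk_edges (c d : V) : ∀ {u v : V} (p : G.Walk u v)
    (hp : ∀ x ∈ p.support, x ≠ c),
    (liftWalk c d p hp).edges.map (Sym2.map Subtype.val) = p.edges
  | _, _, Walk.nil, _ => by simp [liftWalk]
  | _, _, Walk.cons h q, hp => by
      simp only [liftWalk, Walk.edges_cons, List.map_cons, liftWalk_edges, Sym2.map_pair_eq]

lemma liftWalk_length (c d : V) : ∀ {u v : V} (p : G.Walk u v)
    (hp : ∀ x ∈ p.support, x ≠ c),
    (liftWalk c d p hp).length = p.length
  | _, _, Walk.nil, _ => by simp [liftWalk]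
  | _, _, Walk.cons h q, hp => by
      simp only [liftWalk, Walk.length_cons, liftWalk_length]

lemma liftWalk_isPath (c d : V) {u v : V} (p : G.Walk u v)
    (hp : ∀ x ∈ p.support, x ≠ c) (h : p.support.Nodup) :
    (liftWalk c d p hp).IsPath := by
  apply Walk.IsPath.mk'
  apply List.Nodup.of_map Subtype.val
  rw [liftWalk_support]
  exact h

lemma liftWalk_isCycle (c d : V) {u : V} (w : G.Walk u u)
    (hp : ∀ x ∈ w.support, x ≠ c) (hw : w.IsCycle) :
    (liftWalk c d w hp).IsCycle := by
  refine ⟨⟨⟨?_⟩, ?_⟩, ?_⟩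
  · apply List.Nodup.of_map (Sym2.map Subtype.val)
    rw [liftWalk_edges]
    exact hw.isTrail.edges_nodup
  · have h3 := hw.three_le_length
    have hl := liftWalk_length c d w hp
    intro hnil
    rw [hnil] at hl
    simp at hl
    omega
  · apply List.Nodup.of_map Subtype.val
    have hs := liftWalk_support c d w hp
    have h2 : List.map Subtype.val (liftWalk c d w hp).support.tail = w.support.tail := by
      rw [List.map_tail, hs]
    rw [h2]
    exact hw.support_nodup

lemma length_rotate [DecidableEq V] {u v : V} (c : G.Walk v v) (h : u ∈ c.support) :
    (c.rotate _ h).length = c.length := by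
  have h2 := (Walk.rotate_edges c _ h).perm.length_eq
  simpa [Walk.length_edges] using h2

lemma mem_support_closed_iff {u z : V} (w : G.Walk u u) (hnil : w ≠ Walk.nil) :
    z ∈ w.support ↔ z ∈ w.support.tail := by
  cases w with
  | nil => exact absurd rfl hnil
  | cons h q =>
      simp only [Walk.support_cons, List.tail_cons, List.mem_cons]
      constructor
      · rintro (rfl | hz)
        · exact q.end_mem_support
        · exact hz
      · exact Or.inr

lemma mem_rotate [DecidableEq V] {u v z : V} {w : G.Walk u u} (hw : w.IsCycle)
    (hv : v ∈ w.support) : z ∈ (w.rotate _ hv).support ↔ z ∈ w.support := by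
  have h1 : w ≠ Walk.nil := hw.ne_nil
  have h2 : (w.rotate _ hv) ≠ Walk.nil := by
    intro hnil
    have hl := length_rotate w hv
    rw [hnil] at hl
    have := hw.three_le_length
    simp at hl
    omega
  rw [mem_support_closed_iff _ h1, mem_support_closed_iff _ h2]
  exact (Walk.support_rotate w _ hv).mem_iff

/-- Decompose a cycle at its base point: the two (distinct) neighbours of the
base on the cycle, together with the path joining them that avoids the base. -/
lemma cycle_decomp {u : V} (w : G.Walk u u) (hw : w.IsCycle) :
    ∃ (x y : V) (r : G.Walk y x), G.Adj u x ∧ G.Adj u y ∧ x ≠ y ∧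
      r.support.Nodup ∧ u ∉ r.support ∧ r.length + 2 = w.length ∧
      ∀ z ∈ r.support, z ∈ w.support := by
  cases w with
  | nil => exact absurd rfl hw.ne_nil
  | cons h q =>
      rename_i x
      obtain ⟨y, huy, r, hqr⟩ := Walk.exists_eq_cons_of_ne h.ne q.reverse
      have hqs : q.support.Nodup := by
        have := hw.support_nodup
        simpa using this
      have hrevsup : q.support.reverse = u :: r.support := by
        rw [← Walk.support_reverse, hqr, Walk.support_cons]
      have hcons : (u :: r.support).Nodup := by
        rw [← hrevsup]; exact List.nodup_reverse.mpr hqs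
      refine ⟨x, y, r, h, huy, ?_, (List.nodup_cons.mp hcons).2,
        (List.nodup_cons.mp hcons).1, ?_, ?_⟩
      · intro hxy
        subst hxy
        have hnodup := hw.isTrail.edges_nodup
        rw [Walk.edges_cons, List.nodup_cons] at hnodup
        apply hnodup.1
        have : s(u, x) ∈ q.reverse.edges := by
          rw [hqr, Walk.edges_cons]
          exact List.mem_cons_self
        rw [Walk.edges_reverse, List.mem_reverse] at this
        exact this
      · have h1 : q.reverse.length = r.length + 1 := by rw [hqr]; simp
        rw [Walk.length_reverse] at h1
        rw [Walk.length_cons]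
        omega
      · intro z hz
        have hzq : z ∈ q.support := by
          rw [← List.mem_reverse, hrevsup]
          exact List.mem_cons_of_mem _ hz
        rw [Walk.support_cons]
        exact List.mem_cons_of_mem _ hzq

section ZMod

variable {n : ℕ} [NeZero n] {G : SimpleGraph (ZMod n)} {a : ZMod n} {L : ℕ}

lemma cast_ne_zero_of_lt {m : ℕ} (h0 : 0 < m) (hmn : m < n) : (m : ZMod n) ≠ 0 := by
  intro h
  rw [ZMod.natCast_eq_zero_iff] at h
  exact absurd (Nat.le_of_dvd h0 h) (by omega)

lemma interior_nbhd (hH : ∀ i : ZMod n, G.Adj i (i + 1)) (hA : IsArc G a L)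
    (hn : 6 < n) {t : ℕ} (h1 : 1 ≤ t) (h2 : t < L) :
    G.neighborSet (a + (t : ZMod n)) = {a + (t : ZMod n) - 1, a + (t : ZMod n) + 1} := by
  have hd : (a + (t : ZMod n) - 1) ≠ a + (t : ZMod n) + 1 := by
    intro h
    have h2' : ((2 : ℕ) : ZMod n) = 0 := by push_cast; linear_combination -h
    exact cast_ne_zero_of_lt (by norm_num) (by omega) h2'
  have hsub : ({a + (t : ZMod n) - 1, a + (t : ZMod n) + 1} : Set (ZMod n)) ⊆
      G.neighborSet (a + (t : ZMod n)) := by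
    rintro z (rfl | rfl)
    · have h3 := hH (a + (t : ZMod n) - 1)
      have h4 : a + (t : ZMod n) - 1 + 1 = a + (t : ZMod n) := by ring
      rw [h4] at h3
      exact h3.symm
    · exact hH (a + (t : ZMod n))
  have hcard := hA.2.1 t h1 h2
  have := Set.eq_of_subset_of_ncard_le hsub
    (by rw [hcard, Set.ncard_pair hd]) (Set.toFinite _)
  exact this.symm

lemma path_lb (hH : ∀ i : ZMod n, G.Adj i (i + 1)) (hA : IsArc G a L) (hn : 6 < n)
    (hnochord : ¬ G.Adj a (a + (L : ZMod n))) (hL3 : 3 ≤ L) :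
    ∀ (d t : ℕ), t + d = L → 1 ≤ t →
      ∀ (p : G.Walk (a + (t : ZMod n)) a), p.IsPath →
        (a + ((t - 1 : ℕ) : ZMod n)) ∉ p.support → d + 2 ≤ p.length := by
  intro d
  induction d with
  | zero =>
      intro t ht h1 p hp hnot
      have ht' : t = L := by omega
      subst ht'
      by_contra hcon
      push_neg at hcon
      have h01 : p.length = 0 ∨ p.length = 1 := by omega
      rcases h01 with h0 | h0
      · have heq := Walk.eq_of_length_eq_zero h0
        have hL0 : ((t : ℕ) : ZMod n) = 0 := by linear_combination heq
        exact cast_ne_zero_of_lt (by omega) hA.1 hL0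
      · exact hnochord ((Walk.adj_of_length_eq_one (p := p) h0).symm)
  | succ d ih =>
      intro t ht h1 p hp hnot
      have htL : t < L := by omega
      have hne : a + (t : ZMod n) ≠ a := by
        intro h
        have ht0 : ((t : ℕ) : ZMod n) = 0 := by linear_combination h
        exact cast_ne_zero_of_lt h1 (by have := hA.1; omega) ht0
      obtain ⟨z, hz, p₂, rfl⟩ := Walk.exists_eq_cons_of_ne hne p
      have hzmem : z ∈ (Walk.cons hz p₂).support := by
        rw [Walk.support_cons]
        exact List.mem_cons_of_mem _ p₂.start_mem_support
      have hznbr : z = a + (t : ZMod n) - 1 ∨ z = a + (t : ZMod n) + 1 := by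
        have hset := interior_nbhd hH hA hn h1 htL
        have hzmem' : z ∈ G.neighborSet (a + (t : ZMod n)) := hz
        rw [hset] at hzmem'
        simpa using hzmem'
      have hcast : a + ((t - 1 : ℕ) : ZMod n) = a + (t : ZMod n) - 1 := by
        rw [Nat.cast_sub h1]; push_cast; ring
      rcases hznbr with rfl | rfl
      · rw [hcast] at hnot
        exact absurd hzmem hnot
      · have hcast2 : a + (t : ZMod n) + 1 = a + ((t + 1 : ℕ) : ZMod n) := by
          push_cast; ring
        rw [Walk.cons_isPath_iff] at hp
        have hres := ih (t + 1) (by omega) (by omega) (p₂.copy hcast2 rfl)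
          (by simpa using hp.1) (by
            simp only [Walk.support_copy]
            have he : ((t + 1) - 1 : ℕ) = t := by omega
            rw [he]
            exact hp.2)
        rw [Walk.length_copy] at hres
        rw [Walk.length_cons]
        omega

lemma nbhd_one (hH : ∀ i : ZMod n, G.Adj i (i + 1)) (hA : IsArc G a L)
    (hn : 6 < n) (hL3 : 3 ≤ L) :
    G.neighborSet (a + 1) = {a, a + 2} := by
  have h := interior_nbhd hH hA hn (t := 1) le_rfl (by omega)
  rw [Nat.cast_one] at h
  have e1 : a + 1 - 1 = a := by ring
  have e2 : a + 1 + 1 = a + 2 := by ring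
  rw [e1, e2] at h
  exact h

lemma not_adj_a2 (hH : ∀ i : ZMod n, G.Adj i (i + 1)) (hA : IsArc G a L)
    (hn : 6 < n) (hL3 : 3 ≤ L) : ¬ G.Adj a (a + 2) := by
  intro h
  have hmem : a ∈ G.neighborSet (a + 2) := h.symm
  have hset := interior_nbhd hH hA hn (t := 2) (by omega) (by omega)
  have e0 : a + ((2 : ℕ) : ZMod n) = a + 2 := by push_cast; ring
  rw [e0] at hset
  rw [hset] at hmem
  simp only [Set.mem_insert_iff, Set.mem_singleton_iff] at hmem
  rcases hmem with h1 | h1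
  · have h2 : ((1 : ℕ) : ZMod n) = 0 := by push_cast; linear_combination -h1
    exact cast_ne_zero_of_lt (by norm_num) (by omega) h2
  · have h2 : ((3 : ℕ) : ZMod n) = 0 := by push_cast; linear_combination -h1
    exact cast_ne_zero_of_lt (by norm_num) (by omega) h2

/-- A cycle through `a+1` contains the whole arc and a return path, so it has
length at least `L + 2`. -/
lemma cycle_through (hH : ∀ i : ZMod n, G.Adj i (i + 1)) (hA : IsArc G a L)
    (hn : 6 < n) (hnochord : ¬ G.Adj a (a + (L : ZMod n))) (hL3 : 3 ≤ L)
    {u : ZMod n} {w : G.Walk u u} (hw : w.IsCycle) (hmem : a + 1 ∈ w.support) :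
    L + 2 ≤ w.length := by
  classical
  have hw' : (w.rotate _ hmem).IsCycle := hw.rotate hmem
  obtain ⟨x, y, r, hx, hy, hxy, hnd, hnotmem, hlen2, hsub⟩ :=
    cycle_decomp (w.rotate _ hmem) hw'
  have hlenrot : (w.rotate _ hmem).length = w.length := length_rotate w hmem
  have hnb := nbhd_one hH hA hn hL3
  have hx' : x = a ∨ x = a + 2 := by
    have hxm : x ∈ G.neighborSet (a + 1) := hx
    rw [hnb] at hxm
    simpa using hxm
  have hy' : y = a ∨ y = a + 2 := by
    have hym : y ∈ G.neighborSet (a + 1) := hy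
    rw [hnb] at hym
    simpa using hym
  have key : ∀ (r' : G.Walk (a + 2) a), r'.support.Nodup →
      (a + 1) ∉ r'.support → r'.length = r.length → L + 2 ≤ w.length := by
    intro r' hnd' hnot' hlen'
    have hc2 : a + 2 = a + ((2 : ℕ) : ZMod n) := by push_cast; ring
    have hres := path_lb hH hA hn hnochord hL3 (L - 2) 2 (by omega) (by omega)
      (r'.copy hc2 rfl) (Walk.IsPath.mk' (by simpa using hnd')) (by
        simp only [Walk.support_copy]
        have he : ((2 : ℕ) - 1 : ℕ) = 1 := rfl
        rw [he]
        have e0 : a + ((1 : ℕ) : ZMod n) = a + 1 := by push_cast; ring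
        rw [e0]
        exact hnot')
    rw [Walk.length_copy] at hres
    omega
  rcases hx' with rfl | rfl <;> rcases hy' with rfl | rfl
  · exact absurd rfl hxy.symm
  · exact key r hnd hnotmem rfl
  · refine key r.reverse ?_ ?_ (Walk.length_reverse r)
    · rw [Walk.support_reverse]
      exact List.nodup_reverse.mpr hnd
    · rw [Walk.support_reverse, List.mem_reverse]
      exact hnotmem
  · exact absurd rfl hxy.symm

/-- A cycle avoiding `a+1` avoids all the interior vertices of the arc, so it
has length at most `n - L + 1`. -/
lemma cycle_avoid (hH : ∀ i : ZMod n, G.Adj i (i + 1)) (hA : IsArc G a L)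
    (hn : 6 < n) (hL3 : 3 ≤ L) {u : ZMod n} {w : G.Walk u u} (hw : w.IsCycle)
    (hmem : a + 1 ∉ w.support) : w.length + L ≤ n + 1 := by
  classical
  have hchain : ∀ t : ℕ, 1 ≤ t → t < L → (a + (t : ZMod n)) ∉ w.support := by
    intro t
    induction t with
    | zero => omega
    | succ m ihm =>
        intro _ hlt
        by_cases hm0 : m = 0
        · subst hm0
          have e0 : a + ((1 : ℕ) : ZMod n) = a + 1 := by push_cast; ring
          rw [e0]
          exact hmem
        · intro hmem'
          have hold := ihm (by omega) (by omega)
          obtain ⟨x, y, r, hx, hy, hxy, _, _, _, hsub⟩ :=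
            cycle_decomp (w.rotate _ hmem') (hw.rotate hmem')
          have hnb := interior_nbhd hH hA hn (t := m + 1) (by omega) hlt
          have hx' : x = a + ((m + 1 : ℕ) : ZMod n) - 1 ∨
              x = a + ((m + 1 : ℕ) : ZMod n) + 1 := by
            have hxm : x ∈ G.neighborSet (a + ((m + 1 : ℕ) : ZMod n)) := hx
            rw [hnb] at hxm
            simpa using hxm
          have hy' : y = a + ((m + 1 : ℕ) : ZMod n) - 1 ∨
              y = a + ((m + 1 : ℕ) : ZMod n) + 1 := by
            have hym : y ∈ G.neighborSet (a + ((m + 1 : ℕ) : ZMod n)) := hy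
            rw [hnb] at hym
            simpa using hym
          have hprev : a + ((m : ℕ) : ZMod n) = a + ((m + 1 : ℕ) : ZMod n) - 1 := by
            push_cast; ring
          have hxw : x ∈ w.support := by
            have := hsub x r.end_mem_support
            rwa [mem_rotate hw hmem'] at this
          have hyw : y ∈ w.support := by
            have := hsub y r.start_mem_support
            rwa [mem_rotate hw hmem'] at this
          apply hold
          rcases hx' with hxe | hxe <;> rcases hy' with hye | hye
          · exact absurd (hxe.trans hye.symm) hxy
          · rw [hprev, ← hxe]; exact hxw
          · rw [hprev, ← hye]; exact hyw
          · exact absurd (hxe.trans hye.symm) hxy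
  have htail := hw.support_nodup
  have hlen : w.support.tail.length = w.length := by
    have h1 := w.length_support
    have h2 : w.support.tail.length = w.support.length - 1 := by
      cases w.support <;> simp
    omega
  set S : Finset (ZMod n) := (Finset.Icc 1 (L - 1)).image (fun t : ℕ => a + (t : ZMod n))
    with hS
  have hScard : S.card = L - 1 := by
    rw [hS, Finset.card_image_of_injOn, Nat.card_Icc]
    · omega
    · intro i hi j hj hij
      simp only [Finset.coe_Icc, Set.mem_Icc] at hi hj
      have hi' : i < n := by have := hA.1; omega
      have hj' : j < n := by have := hA.1; omega
      have hcast : ((i : ℕ) : ZMod n) = ((j : ℕ) : ZMod n) := by linear_combination hij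
      have := congrArg ZMod.val hcast
      rwa [ZMod.val_cast_of_lt hi', ZMod.val_cast_of_lt hj'] at this
  have hsubset : w.support.tail.toFinset ⊆ Finset.univ \ S := by
    intro z hz
    rw [Finset.mem_sdiff]
    refine ⟨Finset.mem_univ _, ?_⟩
    intro hzS
    rw [hS, Finset.mem_image] at hzS
    obtain ⟨t, ht, rfl⟩ := hzS
    rw [Finset.mem_Icc] at ht
    exact hchain t ht.1 (by omega)
      (List.mem_of_mem_tail (List.mem_toFinset.mp hz))
  have hcard1 : w.support.tail.toFinset.card = w.length := by
    rw [List.toFinset_card_of_nodup htail, hlen]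
  have hle := Finset.card_le_card hsubset
  rw [hcard1, Finset.card_sdiff_of_subset (Finset.subset_univ S), hScard, Finset.card_univ,
    ZMod.card] at hle
  have := hA.1
  omega

end ZMod

end PancyclicAux

/-- If `G` is pancyclic on `n > 6` vertices with the standard Hamiltonian cycle on
`ZMod n`, and `A = (a, a+1, …, a+L)` is an arc with no chord joining its two
endpoints and with `L = |A| ≥ (n-1)/2` edges, then the graph `G_A` obtained by
contracting one edge of `A` is pancyclic on `n - 1` vertices. -/
theorem stmt_8 {n : ℕ} [NeZero n] (hn : 6 < n) (G : SimpleGraph (ZMod n))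
    (hH : ∀ i : ZMod n, G.Adj i (i + 1)) (hG : Pancyclic G)
    (a : ZMod n) (L : ℕ) (hA : IsArc G a L)
    (hnochord : ¬ G.Adj a (a + (L : ZMod n)))
    (hlen : n - 1 ≤ 2 * L) :
    Pancyclic (contractEdge G (a + 1) a) ∧
    Fintype.card {x : ZMod n // x ≠ a + 1} = n - 1 := by
  classical
  have hLn : L < n := hA.1
  have hL3 : 3 ≤ L := by omega
  have hcard : Fintype.card {x : ZMod n // x ≠ a + 1} = n - 1 := by
    have h1 : Fintype.card {x : ZMod n // x ≠ a + 1} =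
        Fintype.card (ZMod n) - 1 := by
      have h2 := Fintype.card_subtype_compl (fun x : ZMod n => x = a + 1)
      rw [Fintype.card_subtype_eq] at h2
      rw [Fintype.card_congr (Equiv.subtypeEquivRight
        (q := fun x : ZMod n => ¬ x = a + 1) (fun x => by simp))]
      exact h2
    rw [h1, ZMod.card]
  refine ⟨?_, hcard⟩
  intro k hk3 hkle
  rw [hcard] at hkle
  obtain ⟨u, w, hw, hwl⟩ := hG k hk3 (by rw [ZMod.card]; omega)
  by_cases hmem : a + 1 ∈ w.support
  · obtain ⟨u', w', hw', hwl'⟩ := hG (k + 1) (by omega) (by rw [ZMod.card]; omega)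
    by_cases hmem' : a + 1 ∈ w'.support
    · -- contract the (k+1)-cycle through a+1
      have hwr := hw'.rotate hmem'
      obtain ⟨x, y, r, hx, hy, hxy, hnd, hnotmem, hlen2, hsub⟩ :=
        PancyclicAux.cycle_decomp (w'.rotate _ hmem') hwr
      have hlenrot := PancyclicAux.length_rotate w' hmem'
      have hnb := PancyclicAux.nbhd_one hH hA hn hL3
      have hx' : x = a ∨ x = a + 2 := by
        have hxm : x ∈ G.neighborSet (a + 1) := hx
        rw [hnb] at hxm
        simpa using hxm
      have hy' : y = a ∨ y = a + 2 := by
        have hym : y ∈ G.neighborSet (a + 1) := hy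
        rw [hnb] at hym
        simpa using hym
      have hnadj := PancyclicAux.not_adj_a2 hH hA hn hL3
      have hne1 : a ≠ a + 1 := by
        intro h
        have : ((1 : ℕ) : ZMod n) = 0 := by push_cast; linear_combination -h
        exact PancyclicAux.cast_ne_zero_of_lt (by norm_num) (by omega) this
      have hne2 : a + 2 ≠ a + 1 := by
        intro h
        have : ((1 : ℕ) : ZMod n) = 0 := by push_cast; linear_combination h
        exact PancyclicAux.cast_ne_zero_of_lt (by norm_num) (by omega) this
      have hnea2 : a ≠ a + 2 := by
        intro h
        have : ((2 : ℕ) : ZMod n) = 0 := by push_cast; linear_combination -h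
        exact PancyclicAux.cast_ne_zero_of_lt (by norm_num) (by omega) this
      have hadj12 : G.Adj (a + 1) (a + 2) := by
        have := hH (a + 1)
        have e : a + 1 + 1 = a + 2 := by ring
        rwa [e] at this
      have hadj : (contractEdge G (a + 1) a).Adj ⟨a, hne1⟩ ⟨a + 2, hne2⟩ :=
        And.intro (PancyclicAux.subtype_ne hnea2) (Or.inr (Or.inl ⟨rfl, hadj12⟩))
      have key : ∀ (r' : G.Walk (a + 2) a), r'.support.Nodup →
          (a + 1) ∉ r'.support → r'.length = r.length →
          HasCycleLength (contractEdge G (a + 1) a) k := by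
        intro r' hnd' hnot' hlen'
        have havoid' : ∀ z ∈ r'.support, z ≠ a + 1 := fun z hz hze => hnot' (hze ▸ hz)
        refine ⟨⟨a, hne1⟩,
          SimpleGraph.Walk.cons hadj (PancyclicAux.liftWalk (a + 1) a r' havoid'),
          ?_, ?_⟩
        · rw [SimpleGraph.Walk.cons_isCycle_iff]
          refine ⟨PancyclicAux.liftWalk_isPath _ _ _ _ hnd', ?_⟩
          intro hedge
          have hmap : Sym2.map Subtype.val
              (s((⟨a, hne1⟩ : {z : ZMod n // z ≠ a + 1}), ⟨a + 2, hne2⟩)) ∈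
              (PancyclicAux.liftWalk (a + 1) a r' havoid').edges.map
                (Sym2.map Subtype.val) :=
            List.mem_map_of_mem hedge
          rw [PancyclicAux.liftWalk_edges, Sym2.map_pair_eq] at hmap
          exact hnadj (r'.adj_of_mem_edges hmap)
        · rw [SimpleGraph.Walk.length_cons, PancyclicAux.liftWalk_length]
          omega
      rcases hx' with rfl | rfl <;> rcases hy' with rfl | rfl
      · exact absurd rfl hxy.symm
      · exact key r hnd hnotmem rfl
      · refine key r.reverse ?_ ?_ (SimpleGraph.Walk.length_reverse r)
        · rw [SimpleGraph.Walk.support_reverse]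
          exact List.nodup_reverse.mpr hnd
        · rw [SimpleGraph.Walk.support_reverse, List.mem_reverse]
          exact hnotmem
      · exact absurd rfl hxy.symm
    · exfalso
      have hlow := PancyclicAux.cycle_through hH hA hn hnochord hL3 hw hmem
      have hhigh := PancyclicAux.cycle_avoid hH hA hn hL3 hw' hmem'
      omega
  · have hpavoid : ∀ x ∈ w.support, x ≠ a + 1 := fun x hx hxe => hmem (hxe ▸ hx)
    refine ⟨⟨u, hpavoid u w.start_mem_support⟩,
      PancyclicAux.liftWalk (a + 1) a w hpavoid,
      PancyclicAux.liftWalk_isCycle _ _ _ _ hw, ?_⟩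
    rw [PancyclicAux.liftWalk_length]
    exact hwl
end

section
/- m(7) = 9: every pancyclic graph on 7 vertices has at least 9 edges, and there exists a pancyclic graph on 7 vertices with exactly 9 edges. -/
open SimpleGraph

/-! ### Auxiliary machinery -/

/-- Transfer of cycles along injective homomorphisms. -/
lemma HasCycleLength.mapInj {V W : Type*} {G : SimpleGraph V} {H : SimpleGraph W}
    (f : G →g H) (hf : Function.Injective f) {k : ℕ}
    (h : HasCycleLength G k) : HasCycleLength H k := by
  obtain ⟨v, w, hc, hl⟩ := h
  exact ⟨f v, w.map f, hc.map hf, by simp [hl]⟩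

lemma triangle_of_cycle3 {V : Type*} {G : SimpleGraph V} (h : HasCycleLength G 3) :
    ∃ a b c : V, a ≠ b ∧ a ≠ c ∧ b ≠ c ∧ G.Adj a b ∧ G.Adj b c ∧ G.Adj c a := by
  obtain ⟨v, w, hc, hl⟩ := h
  have hn := hc.support_nodup
  cases w with
  | nil => simp at hl
  | cons h1 w =>
  cases w with
  | nil => simp at hl
  | cons h2 w =>
  cases w with
  | nil => simp at hl
  | cons h3 w =>
  cases w with
  | cons h4 w => simp at hl
  | nil =>
    simp only [Walk.support_cons, Walk.support_nil, List.tail_cons, List.nodup_cons,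
      List.mem_cons, List.mem_singleton, List.not_mem_nil, or_false, not_or,
      List.nodup_nil, and_true] at hn
    exact ⟨v, _, _, h1.ne, Ne.symm hn.2.1, hn.1.1, h1, h2, h3⟩

lemma quad_of_cycle4 {V : Type*} {G : SimpleGraph V} (h : HasCycleLength G 4) :
    ∃ a b c d : V, a ≠ b ∧ a ≠ c ∧ a ≠ d ∧ b ≠ c ∧ b ≠ d ∧ c ≠ d ∧
      G.Adj a b ∧ G.Adj b c ∧ G.Adj c d ∧ G.Adj d a := by
  obtain ⟨v, w, hc, hl⟩ := h
  have hn := hc.support_nodup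
  cases w with
  | nil => simp at hl
  | cons h1 w =>
  cases w with
  | nil => simp at hl
  | cons h2 w =>
  cases w with
  | nil => simp at hl
  | cons h3 w =>
  cases w with
  | nil => simp at hl
  | cons h4 w =>
  cases w with
  | cons h5 w => simp at hl
  | nil =>
    simp only [Walk.support_cons, Walk.support_nil, List.tail_cons, List.nodup_cons,
      List.mem_cons, List.mem_singleton, List.not_mem_nil, or_false, not_or,
      List.nodup_nil, and_true] at hn
    obtain ⟨⟨hbc, hbd, hbv⟩, ⟨hcd, hcv⟩, hdv, -⟩ := hn
    exact ⟨v, _, _, _, h1.ne, Ne.symm hcv, Ne.symm hdv, hbc, hbd, hcd, h1, h2, h3, h4⟩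

def stdF : Finset (Sym2 (Fin 7)) := {s(0,1),s(1,2),s(2,3),s(3,4),s(4,5),s(5,6),s(6,0)}

lemma key : ∀ e : Sym2 (Fin 7),
    ¬ ((∃ a b c : Fin 7, a ≠ b ∧ a ≠ c ∧ b ≠ c ∧
          s(a,b) ∈ insert e stdF ∧ s(b,c) ∈ insert e stdF ∧ s(c,a) ∈ insert e stdF) ∧
       (∃ a b c d : Fin 7, a ≠ b ∧ a ≠ c ∧ a ≠ d ∧ b ≠ c ∧ b ≠ d ∧ c ≠ d ∧
          s(a,b) ∈ insert e stdF ∧ s(b,c) ∈ insert e stdF ∧ s(c,d) ∈ insert e stdF ∧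
          s(d,a) ∈ insert e stdF)) := by decide

set_option maxRecDepth 8000 in
lemma ham_of_cycle7 {V : Type*} [DecidableEq V] {G : SimpleGraph V} (h : HasCycleLength G 7) :
    ∃ x : Fin 7 → V, Function.Injective x ∧ ∀ i : Fin 7, G.Adj (x i) (x (i + 1)) := by
  obtain ⟨v, w, hc, hl⟩ := h
  have hn := hc.support_nodup
  cases w with
  | nil => simp at hl
  | cons h1 w =>
  cases w with
  | nil => simp at hl
  | cons h2 w =>
  cases w with
  | nil => simp at hl
  | cons h3 w =>
  cases w with
  | nil => simp at hl
  | cons h4 w =>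
  cases w with
  | nil => simp at hl
  | cons h5 w =>
  cases w with
  | nil => simp at hl
  | cons h6 w =>
  cases w with
  | nil => simp at hl
  | cons h7 w =>
  cases w with
  | cons h8 w => simp at hl
  | nil =>
    rename_i x1 x2 x3 x4 x5 x6
    simp only [Walk.support_cons, Walk.support_nil, List.tail_cons, List.nodup_cons,
      List.mem_cons, List.mem_singleton, List.not_mem_nil, or_false, not_or,
      List.nodup_nil, and_true] at hn
    have hinj : Function.Injective ![v, x1, x2, x3, x4, x5, x6] := by
      clear hc hl h1 h2 h3 h4 h5 h6 h7
      intro i j hij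
      fin_cases i <;> fin_cases j <;>
        simp_all [show (![v, x1, x2, x3, x4, x5, x6] : Fin 7 → V) 5 = x5 from rfl,
          show (![v, x1, x2, x3, x4, x5, x6] : Fin 7 → V) 6 = x6 from rfl]
    refine ⟨![v, x1, x2, x3, x4, x5, x6], hinj, ?_⟩
    · intro i
      fin_cases i
      · simpa using h1
      · simpa using h2
      · simpa using h3
      · simpa using h4
      · simpa using h5
      · simpa using h6
      · simpa using h7

lemma lower_bound (G : SimpleGraph (Fin 7)) (hp : Pancyclic G) : 9 ≤ G.edgeSet.ncard := by
  by_contra hlt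
  push_neg at hlt
  have hcard : G.edgeSet.ncard ≤ 8 := by omega
  -- a Hamiltonian cycle
  obtain ⟨x, hinj, hadj⟩ := ham_of_cycle7 (hp 7 (by norm_num) (by simp))
  -- relabel
  let G' : SimpleGraph (Fin 7) := G.comap x
  have hb : Function.Bijective x := (Finite.injective_iff_bijective).mp hinj
  let σ : Fin 7 ≃ Fin 7 := Equiv.ofBijective x hb
  have hxs : ∀ a, x (σ.symm a) = a := fun a => Equiv.ofBijective_apply_symm_apply x hb a
  let hom : G →g G' :=
    ⟨fun a => σ.symm a, fun {a b} h => by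
      show G.Adj (x (σ.symm a)) (x (σ.symm b)); rw [hxs, hxs]; exact h⟩
  have hmap : ∀ k, HasCycleLength G k → HasCycleLength G' k := fun k h =>
    h.mapInj hom σ.symm.injective
  -- G' has few edges
  have himg : Sym2.map x '' G'.edgeSet ⊆ G.edgeSet := by
    rintro y ⟨e, he, rfl⟩
    induction e using Sym2.ind with
    | _ a b => exact (by exact he : G.Adj (x a) (x b))
  have hcard' : G'.edgeSet.ncard ≤ 8 := by
    calc G'.edgeSet.ncard = (Sym2.map x '' G'.edgeSet).ncard :=
          (Set.ncard_image_of_injective _ (Sym2.map.injective hinj)).symm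
      _ ≤ G.edgeSet.ncard := Set.ncard_le_ncard himg (Set.toFinite _)
      _ ≤ 8 := hcard
  -- G' contains the standard 7-cycle
  have hstd : (↑stdF : Set (Sym2 (Fin 7))) ⊆ G'.edgeSet := by
    intro y hy
    have : y = s(0,1) ∨ y = s(1,2) ∨ y = s(2,3) ∨ y = s(3,4) ∨ y = s(4,5) ∨ y = s(5,6)
        ∨ y = s(6,0) := by
      simpa [stdF] using hy
    have hA : ∀ i : Fin 7, G'.Adj i (i + 1) := fun i => hadj i
    rcases this with rfl|rfl|rfl|rfl|rfl|rfl|rfl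
    · exact (hA 0)
    · exact (hA 1)
    · exact (hA 2)
    · exact (hA 3)
    · exact (hA 4)
    · exact (hA 5)
    · exact (by simpa using hA 6)
  -- at most one extra edge
  have hdiff : (G'.edgeSet \ ↑stdF).ncard ≤ 1 := by
    have h7 : (↑stdF : Set (Sym2 (Fin 7))).ncard = 7 := by
      rw [Set.ncard_coe_finset]; decide
    have := Set.ncard_diff_add_ncard_of_subset hstd (Set.toFinite _)
    omega
  obtain ⟨e, he⟩ : ∃ e, G'.edgeSet ⊆ ↑(insert e stdF) := by
    rcases (G'.edgeSet \ ↑stdF).eq_empty_or_nonempty with h0 | ⟨e, he⟩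
    · refine ⟨s(0,1), fun y hy => ?_⟩
      rw [Finset.coe_insert]
      exact Set.mem_insert_of_mem _ (Set.diff_eq_empty.mp h0 hy)
    · refine ⟨e, fun y hy => ?_⟩
      rw [Finset.coe_insert]
      by_cases hys : y ∈ (↑stdF : Set (Sym2 (Fin 7)))
      · exact Set.mem_insert_of_mem _ hys
      · have : y = e := (Set.ncard_le_one (Set.toFinite _)).mp hdiff y ⟨hy, hys⟩ e he
        exact this ▸ Set.mem_insert _ _
  have hmem : ∀ a b : Fin 7, G'.Adj a b → s(a, b) ∈ insert e stdF := fun a b h =>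
    he ((mem_edgeSet G').mpr h)
  -- extract a triangle and a quadrilateral
  obtain ⟨a, b, c, hab, hac, hbc, e1, e2, e3⟩ := triangle_of_cycle3 (hmap 3 (hp 3 (by norm_num) (by simp)))
  obtain ⟨a', b', c', d', h1, h2, h3, h4, h5, h6, f1, f2, f3, f4⟩ :=
    quad_of_cycle4 (hmap 4 (hp 4 (by norm_num) (by simp)))
  exact key e ⟨⟨a, b, c, hab, hac, hbc, hmem _ _ e1, hmem _ _ e2, hmem _ _ e3⟩,
    ⟨a', b', c', d', h1, h2, h3, h4, h5, h6,
      hmem _ _ f1, hmem _ _ f2, hmem _ _ f3, hmem _ _ f4⟩⟩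

/-! ### The extremal example -/

instance instDecIsCycle {V : Type*} [DecidableEq V] {G : SimpleGraph V} {u : V}
    (p : G.Walk u u) : Decidable p.IsCycle :=
  decidable_of_iff (p.edges.Nodup ∧ p.length ≠ 0 ∧ p.support.tail.Nodup)
    ⟨fun ⟨a, b, c⟩ => ⟨⟨⟨a⟩, fun h => b (by simp [h])⟩, c⟩,
     fun ⟨⟨⟨a⟩, b⟩, c⟩ => ⟨a, fun h => b (Walk.nil_iff_eq_nil.mp (Walk.length_eq_zero_iff.mp h)), c⟩⟩

def exF : Finset (Sym2 (Fin 7)) :=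
  {s(0,1), s(1,2), s(2,3), s(3,4), s(4,5), s(5,6), s(6,0), s(0,2), s(0,4)}

def Gex : SimpleGraph (Fin 7) := fromEdgeSet (↑exF : Set (Sym2 (Fin 7)))

instance : DecidableRel Gex.Adj :=
  fun a b => decidable_of_iff (s(a,b) ∈ exF ∧ a ≠ b) (by rw [Gex, fromEdgeSet_adj]; simp)

def w3 : Gex.Walk 0 0 :=
  .cons (show Gex.Adj 0 1 by decide) (.cons (show Gex.Adj 1 2 by decide)
    (.cons (show Gex.Adj 2 0 by decide) .nil))

def w4 : Gex.Walk 0 0 :=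
  .cons (show Gex.Adj 0 2 by decide) (.cons (show Gex.Adj 2 3 by decide)
    (.cons (show Gex.Adj 3 4 by decide) (.cons (show Gex.Adj 4 0 by decide) .nil)))

def w5 : Gex.Walk 0 0 :=
  .cons (show Gex.Adj 0 1 by decide) (.cons (show Gex.Adj 1 2 by decide)
    (.cons (show Gex.Adj 2 3 by decide) (.cons (show Gex.Adj 3 4 by decide)
      (.cons (show Gex.Adj 4 0 by decide) .nil))))

def w6 : Gex.Walk 0 0 :=
  .cons (show Gex.Adj 0 2 by decide) (.cons (show Gex.Adj 2 3 by decide)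
    (.cons (show Gex.Adj 3 4 by decide) (.cons (show Gex.Adj 4 5 by decide)
      (.cons (show Gex.Adj 5 6 by decide) (.cons (show Gex.Adj 6 0 by decide) .nil)))))

def w7 : Gex.Walk 0 0 :=
  .cons (show Gex.Adj 0 1 by decide) (.cons (show Gex.Adj 1 2 by decide)
    (.cons (show Gex.Adj 2 3 by decide) (.cons (show Gex.Adj 3 4 by decide)
      (.cons (show Gex.Adj 4 5 by decide) (.cons (show Gex.Adj 5 6 by decide)
        (.cons (show Gex.Adj 6 0 by decide) .nil))))))

lemma Gex_pancyclic : Pancyclic Gex := by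
  intro k h3 h7
  simp only [Fintype.card_fin] at h7
  interval_cases k
  · exact ⟨0, w3, by decide, by decide⟩
  · exact ⟨0, w4, by decide, by decide⟩
  · exact ⟨0, w5, by decide, by decide⟩
  · exact ⟨0, w6, by decide, by decide⟩
  · exact ⟨0, w7, by decide, by decide⟩

lemma Gex_ncard : Gex.edgeSet.ncard = 9 := by
  have : Gex.edgeSet = ↑exF := by
    rw [Gex, edgeSet_fromEdgeSet]
    rw [sdiff_eq_self_iff_disjoint]
    rw [Set.disjoint_left]
    intro y hy1 hy2
    revert hy1
    revert y
    decide
  rw [this, Set.ncard_coe_finset]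
  decide

/-- `m 7 = 9`: every pancyclic graph on 7 vertices has at least 9 edges, and there
is a pancyclic graph on 7 vertices with exactly 9 edges. -/
theorem stmt_15 :
    (∀ G : SimpleGraph (Fin 7), Pancyclic G → 9 ≤ G.edgeSet.ncard) ∧
    (∃ G : SimpleGraph (Fin 7), Pancyclic G ∧ G.edgeSet.ncard = 9) ∧
    m 7 = 9 := by
  refine ⟨lower_bound, ⟨Gex, Gex_pancyclic, Gex_ncard⟩, ?_⟩
  refine le_antisymm (Nat.sInf_le ⟨Gex, Gex_pancyclic, Gex_ncard⟩) ?_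
  refine le_csInf ⟨9, Gex, Gex_pancyclic, Gex_ncard⟩ ?_
  rintro n ⟨G, hG, rfl⟩
  exact lower_bound G hG
end
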